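/- There is no k-vertex-critical graph, for any k, among the P_4-free expansions of the graph G_2, where G_2 is the graph on vertices v_1,…,v_6 with edge set {v_1v_2, v_1v_5, v_1v_6, v_2v_3, v_3v_4, v_3v_6, v_4v_5, v_4v_6}. In particular, if G is obtained from G_2 by replacing each vertex v_i by a nonempty P_4-free graph Q_i, joining Q_i completely to Q_j exactly when v_iv_j ∈ E(G_2), then G is not k-vertex-critical for any k. -/

import Mathlib

open SimpleGraph

/-- A graph is `k`-vertex-critical if its chromatic number is `k` and deleting
any vertex lowers the chromatic number. -/
def IsKVertexCritical {V : Type*} (G : SimpleGraph V) (k : ℕ) : Prop :=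
  G.chromaticNumber = (k : ℕ∞) ∧
    ∀ v : V, (G.induce {u | u ≠ v}).chromaticNumber < (k : ℕ∞)

/-- The clique number of a graph. -/
noncomputable def cliqueNum' {V : Type*} (G : SimpleGraph V) : ℕ :=
  sSup {n | ∃ s : Finset V, G.IsNClique n s}

/-- `G` has no induced subgraph isomorphic to `H`. -/
def IndFree {W V : Type*} (H : SimpleGraph W) (G : SimpleGraph V) : Prop :=
  ¬ ∃ s : Set V, Nonempty (H ≃g G.induce s)

def CompleteTo {V : Type*} (G : SimpleGraph V) (S T : Set V) : Prop :=
  ∀ s ∈ S, ∀ t ∈ T, G.Adj s t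

def AnticompleteTo {V : Type*} (G : SimpleGraph V) (S T : Set V) : Prop :=
  ∀ s ∈ S, ∀ t ∈ T, ¬ G.Adj s t

/-- `M` is a module of `G`: each outside vertex is complete or anticomplete to `M`. -/
def IsModule {V : Type*} (G : SimpleGraph V) (M : Set V) : Prop :=
  ∀ v ∉ M, (∀ m ∈ M, G.Adj v m) ∨ (∀ m ∈ M, ¬ G.Adj v m)

/-- A non-trivial module: a module `M` with `2 ≤ |M| < |V(G)|`. -/
def IsNontrivialModule {V : Type*} (G : SimpleGraph V) (M : Set V) : Prop :=
  IsModule G M ∧ 2 ≤ M.ncard ∧ M.ncard < Nat.card V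

/-- `G` is an expansion of `H` with parts `Q w`: parts are nonempty, partition `V(G)`,
are completely joined along edges of `H` and anticomplete along non-edges. -/
def IsExpansion {V W : Type*} (G : SimpleGraph V) (H : SimpleGraph W) (Q : W → Set V) : Prop :=
  (∀ w, (Q w).Nonempty) ∧
  (Pairwise fun w w' => Disjoint (Q w) (Q w')) ∧
  (∀ v, ∃ w, v ∈ Q w) ∧
  (∀ w w', H.Adj w w' → CompleteTo G (Q w) (Q w')) ∧
  (∀ w w', w ≠ w' → ¬ H.Adj w w' → AnticompleteTo G (Q w) (Q w'))

/-- The path on four vertices. -/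
def P4 : SimpleGraph (Fin 4) := SimpleGraph.pathGraph 4

/-- The path on five vertices. -/
def P5 : SimpleGraph (Fin 5) := SimpleGraph.pathGraph 5

/-- The gem: a `P₄` (0-1-2-3) plus a dominating vertex 4. -/
def gem : SimpleGraph (Fin 5) :=
  SimpleGraph.fromRel (fun a b =>
    (a, b) ∈ [((0 : Fin 5), (1 : Fin 5)), (1, 2), (2, 3), (4, 0), (4, 1), (4, 2), (4, 3)])

/-- The five-cycle. -/
def cycle5 : SimpleGraph (Fin 5) :=
  SimpleGraph.fromRel (fun a b =>
    (a, b) ∈ [((0 : Fin 5), (1 : Fin 5)), (1, 2), (2, 3), (3, 4), (4, 0)])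

/-- The graph `G₂` of the structure theorem (vertices `v₁,…,v₆` are `0,…,5`). -/
def graphG2 : SimpleGraph (Fin 6) :=
  SimpleGraph.fromRel (fun a b =>
    (a, b) ∈ [((0 : Fin 6), (1 : Fin 6)), (0, 4), (0, 5), (1, 2), (2, 3), (2, 5), (3, 4), (3, 5)])

/-! ### Auxiliary machinery -/

instance : DecidableRel graphG2.Adj := fun a b =>
  decidable_of_iff' _ (SimpleGraph.fromRel_adj _ a b)

/-- Pattern form of `P₄`-freeness. -/
def NoP4 {V : Type*} (G : SimpleGraph V) : Prop :=
  ∀ a b c d : V, G.Adj a b → G.Adj b c → G.Adj c d →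
    ¬ G.Adj a c → ¬ G.Adj b d → ¬ G.Adj a d → False

lemma IndFree.p4_pattern {V : Type*} {G : SimpleGraph V} (hfree : IndFree P4 G) {a b c d : V}
    (hab : G.Adj a b) (hbc : G.Adj b c) (hcd : G.Adj c d)
    (hac : ¬ G.Adj a c) (hbd : ¬ G.Adj b d) (had : ¬ G.Adj a d) : False := by
  have hba := hab.symm; have hcb := hbc.symm; have hdc := hcd.symm
  have hca : ¬ G.Adj c a := fun h => hac h.symm
  have hdb : ¬ G.Adj d b := fun h => hbd h.symm
  have hda : ¬ G.Adj d a := fun h => had h.symm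
  have nab : a ≠ b := hab.ne
  have nbc : b ≠ c := hbc.ne
  have ncd : c ≠ d := hcd.ne
  have nac : a ≠ c := by rintro rfl; exact had hcd
  have nad : a ≠ d := by rintro rfl; exact hbd hab.symm
  have nbd : b ≠ d := by rintro rfl; exact had hab
  set f : Fin 4 → V := ![a, b, c, d] with hf
  have hinj : Function.Injective f := by
    intro i j hij
    fin_cases i <;> fin_cases j <;>
      first
        | rfl
        | (exfalso; revert hij;
           simp only [hf, Matrix.cons_val_zero, Matrix.cons_val_one, Matrix.head_cons,
             Matrix.cons_val_two, Matrix.tail_cons, Matrix.cons_val_three]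
           <;> first
             | exact nab | exact nbc | exact ncd | exact nac | exact nad | exact nbd
             | exact fun h => nab h.symm | exact fun h => nbc h.symm | exact fun h => ncd h.symm
             | exact fun h => nac h.symm | exact fun h => nad h.symm | exact fun h => nbd h.symm)
  refine hfree ⟨Set.range f, ⟨⟨Equiv.ofInjective f hinj, ?_⟩⟩⟩
  intro i j
  have key : ∀ i, ((Equiv.ofInjective f hinj) i : V) = f i := fun i => rfl
  show (G.induce (Set.range f)).Adj _ _ ↔ P4.Adj i j
  have hred : (G.induce (Set.range f)).Adj (Equiv.ofInjective f hinj i)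
      (Equiv.ofInjective f hinj j) ↔ G.Adj (f i) (f j) := by
    simp [comap_adj, key]
  rw [hred]
  have haa : ¬ G.Adj a a := G.loopless.irrefl a
  have hbb : ¬ G.Adj b b := G.loopless.irrefl b
  have hcc : ¬ G.Adj c c := G.loopless.irrefl c
  have hdd : ¬ G.Adj d d := G.loopless.irrefl d
  fin_cases i <;> fin_cases j <;>
    first
      | exact iff_of_true hab (by rw [P4, pathGraph_adj]; decide)
      | exact iff_of_true hba (by rw [P4, pathGraph_adj]; decide)
      | exact iff_of_true hbc (by rw [P4, pathGraph_adj]; decide)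
      | exact iff_of_true hcb (by rw [P4, pathGraph_adj]; decide)
      | exact iff_of_true hcd (by rw [P4, pathGraph_adj]; decide)
      | exact iff_of_true hdc (by rw [P4, pathGraph_adj]; decide)
      | exact iff_of_false hac (by rw [P4, pathGraph_adj]; decide)
      | exact iff_of_false hca (by rw [P4, pathGraph_adj]; decide)
      | exact iff_of_false hbd (by rw [P4, pathGraph_adj]; decide)
      | exact iff_of_false hdb (by rw [P4, pathGraph_adj]; decide)
      | exact iff_of_false had (by rw [P4, pathGraph_adj]; decide)
      | exact iff_of_false hda (by rw [P4, pathGraph_adj]; decide)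
      | exact iff_of_false haa (by rw [P4, pathGraph_adj]; decide)
      | exact iff_of_false hbb (by rw [P4, pathGraph_adj]; decide)
      | exact iff_of_false hcc (by rw [P4, pathGraph_adj]; decide)
      | exact iff_of_false hdd (by rw [P4, pathGraph_adj]; decide)

universe u

/-- A finite `P₄`-free graph has a clique whose size attains a proper colouring bound
(weak perfection). -/
theorem cograph_perfect (n : ℕ) : ∀ {V : Type u} [Fintype V] (G : SimpleGraph V),
    Fintype.card V ≤ n → NoP4 G →
    ∃ s : Finset V, G.IsClique ↑s ∧ G.Colorable s.card := by
  induction n with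
  | zero =>
    intro V _ G hcard _
    have : IsEmpty V := Fintype.card_eq_zero_iff.mp (Nat.le_zero.mp hcard)
    exact ⟨∅, by simp [SimpleGraph.IsClique], by
      simpa using this⟩
  | succ n ih =>
    intro V _ G hcard hnp4
    classical
    by_cases hV : Nonempty V
    · -- pick a maximum-cardinality independent set S
      obtain ⟨v0⟩ := hV
      set P : Finset V → Prop := fun s => ∀ x ∈ s, ∀ y ∈ s, x ≠ y → ¬ G.Adj x y with hP
      have hne : (Finset.univ.powerset.filter P).Nonempty :=
        ⟨{v0}, by simp [hP]⟩
      obtain ⟨S, hSmem, hSmax⟩ := Finset.exists_max_image _ Finset.card hne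
      have hSindep : P S := (Finset.mem_filter.mp hSmem).2
      have hSne : S.Nonempty := by
        rcases Finset.eq_empty_or_nonempty S with rfl | h
        · exfalso
          have := hSmax {v0} (by simp [hP])
          simp at this
        · exact h
      have hSmax' : ∀ v ∉ S, ∃ u ∈ S, G.Adj v u := by
        intro v hv
        by_contra hcon
        push_neg at hcon
        have hmem : insert v S ∈ Finset.univ.powerset.filter P := by
          refine Finset.mem_filter.mpr ⟨by simp, ?_⟩
          intro x hx y hy hxy
          simp only [Finset.mem_insert] at hx hy
          rcases hx with rfl | hx
          · rcases hy with rfl | hy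
            · exact absurd rfl hxy
            · exact hcon y hy
          · rcases hy with rfl | hy
            · exact fun h => hcon x hx h.symm
            · exact hSindep x hx y hy hxy
        have := hSmax _ hmem
        rw [Finset.card_insert_of_notMem hv] at this
        omega
      -- induced subgraph on complement of S
      set T : Set V := {v | v ∉ S} with hT
      haveI : Fintype ↥T := Fintype.ofFinite _
      have hTcard : Fintype.card ↥T ≤ n := by
        obtain ⟨s0, hs0⟩ := hSne
        have h1 : Fintype.card ↥T < Fintype.card V := by
          have h2 : Fintype.card ↥T = Nat.card ↥T := (Nat.card_eq_fintype_card).symm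
          rw [h2, ← Nat.card_eq_fintype_card]
          exact Finite.card_subtype_lt (p := fun v => v ∉ S) (x := s0) (by simp [hs0])
        omega
      have hnp4' : NoP4 (G.induce T) := by
        intro a b c d hab hbc hcd hac hbd had
        exact hnp4 a.1 b.1 c.1 d.1 (by simpa using hab) (by simpa using hbc)
          (by simpa using hcd) (by simpa using hac) (by simpa using hbd) (by simpa using had)
      obtain ⟨t, htclique, htcol⟩ := ih (G.induce T) hTcard hnp4'
      -- clique in G
      set K : Finset V := t.map ⟨Subtype.val, Subtype.val_injective⟩ with hK
      have hKclique : G.IsClique ↑K := by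
        intro x hx y hy hxy
        simp only [hK, Finset.coe_map, Set.mem_image, Function.Embedding.coeFn_mk,
          Finset.mem_coe] at hx hy
        obtain ⟨x', hx', rfl⟩ := hx
        obtain ⟨y', hy', rfl⟩ := hy
        have := htclique hx' hy' (fun h => hxy (congrArg Subtype.val h))
        simpa using this
      have hKT : ∀ x ∈ K, x ∉ S := by
        intro x hx
        simp only [hK, Finset.mem_map, Function.Embedding.coeFn_mk] at hx
        obtain ⟨x', _, rfl⟩ := hx
        exact x'.2
      have hKcard : K.card = t.card := Finset.card_map _
      -- G is colorable with t.card + 1 colors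
      have hGcol : G.Colorable (t.card + 1) := by
        rw [SimpleGraph.colorable_iff_exists_bdd_nat_coloring]
        obtain ⟨C', hC'⟩ := (SimpleGraph.colorable_iff_exists_bdd_nat_coloring _).mp htcol
        have hvalid : ∀ {v w : V}, G.Adj v w →
            (if hv : v ∈ S then t.card else C' ⟨v, hv⟩) ≠
              (if hw : w ∈ S then t.card else C' ⟨w, hw⟩) := by
          intro v w hvw
          split_ifs with hv hw hw
          · exact absurd hvw (hSindep v hv w hw hvw.ne)
          · exact fun h => (Nat.lt_irrefl _ (h ▸ hC' ⟨w, hw⟩))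
          · exact fun h => (Nat.lt_irrefl _ (h.symm ▸ hC' ⟨v, hv⟩))
          · have hadj : (G.induce T).Adj ⟨v, hv⟩ ⟨w, hw⟩ := by simpa using hvw
            exact fun h => C'.valid hadj h
        refine ⟨SimpleGraph.Coloring.mk
          (fun v => if hv : v ∈ S then t.card else C' ⟨v, hv⟩) hvalid, ?_⟩
        intro v
        show (if hv : v ∈ S then t.card else C' ⟨v, hv⟩) < t.card + 1
        split_ifs with hv
        · omega
        · exact Nat.lt_succ_of_lt (hC' _)
      -- try to extend the clique by a vertex of S
      by_cases hext : ∃ x ∈ S, ∀ y ∈ K, G.Adj x y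
      · obtain ⟨x, hxS, hxK⟩ := hext
        have hxnotK : x ∉ K := fun h => hKT x h hxS
        refine ⟨insert x K, ?_, ?_⟩
        · intro u hu v hv huv
          simp only [Finset.coe_insert, Set.mem_insert_iff, Finset.mem_coe] at hu hv
          rcases hu with rfl | hu <;> rcases hv with rfl | hv
          · exact absurd rfl huv
          · exact hxK v hv
          · exact (hxK u hu).symm
          · exact hKclique hu hv huv
        · rw [Finset.card_insert_of_notMem hxnotK, hKcard]
          exact hGcol
      · -- derive a P4, contradiction
        exfalso
        push_neg at hext
        obtain ⟨s, hsS, hsmax⟩ := Finset.exists_max_image S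
          (fun x => (K.filter (fun y => G.Adj x y)).card) hSne
        obtain ⟨u, huK, hsu⟩ := hext s hsS
        have huS : u ∉ S := hKT u huK
        obtain ⟨tv, htvS, hutv⟩ := hSmax' u huS
        have htvs : tv ≠ s := by rintro rfl; exact hsu hutv.symm
        have hw : ∃ w ∈ K, G.Adj s w ∧ ¬ G.Adj tv w := by
          by_contra hcon
          push_neg at hcon
          have hsub : (K.filter (fun y => G.Adj s y)) ⊆ (K.filter (fun y => G.Adj tv y)) := by
            intro y hy
            rw [Finset.mem_filter] at hy ⊢
            exact ⟨hy.1, hcon y hy.1 hy.2⟩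
          have hu1 : u ∈ K.filter (fun y => G.Adj tv y) :=
            Finset.mem_filter.mpr ⟨huK, hutv.symm⟩
          have hu2 : u ∉ K.filter (fun y => G.Adj s y) := by
            rw [Finset.mem_filter]; rintro ⟨-, h⟩; exact hsu h
          have hlt : (K.filter (fun y => G.Adj s y)).card <
              (K.filter (fun y => G.Adj tv y)).card :=
            Finset.card_lt_card ⟨hsub, fun h => hu2 (h hu1)⟩
          exact absurd (hsmax tv htvS) (by omega)
        obtain ⟨w, hwK, hsw, htvw⟩ := hw
        have hwu : w ≠ u := by rintro rfl; exact hsu hsw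
        have huw : G.Adj u w := hKclique (by simpa using huK) (by simpa using hwK) (Ne.symm hwu)
        have htvS' : ¬ G.Adj tv s := hSindep tv htvS s hsS htvs
        have htvu : G.Adj tv u := hutv.symm
        have hus : ¬ G.Adj u s := fun h => hsu h.symm
        exact hnp4 tv u w s htvu huw hsw.symm htvw hus htvS'
    · rw [not_nonempty_iff] at hV
      exact ⟨∅, by simp [SimpleGraph.IsClique], by
        simpa using hV⟩

section helpers
variable {V : Type*} {G : SimpleGraph V}

lemma clique_card_le_of_induce_colorable {s : Set V} {M : ℕ}
    (h : (G.induce s).Colorable M) {t : Finset V} (ht : G.IsClique ↑t)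
    (hts : ∀ x ∈ t, x ∈ s) : t.card ≤ M := by
  classical
  set t' : Finset ↥s := t.attach.map
    ⟨fun x => ⟨x.1, hts _ x.2⟩, fun x y hxy => by
      apply Subtype.ext; have := congrArg Subtype.val hxy; simpa using this⟩ with ht'
  have hcard : t'.card = t.card := by simp [ht']
  have hclique : (G.induce s).IsClique ↑t' := by
    intro u hu v hv huv
    simp only [ht', Finset.coe_map, Set.mem_image, Finset.mem_coe, Finset.mem_attach,
      Function.Embedding.coeFn_mk, true_and] at hu hv
    obtain ⟨⟨x, hx⟩, -, rfl⟩ := hu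
    obtain ⟨⟨y, hy⟩, -, rfl⟩ := hv
    have hxy : x ≠ y := fun hh => huv (by subst hh; rfl)
    have := ht hx hy hxy
    exact this
  have := hclique.card_le_of_colorable h
  omega

lemma card_le_two_mul_of_induce_colorable {s : Set V} {M : ℕ}
    (h : (G.induce s).Colorable M) (U : Finset V) (hUs : ∀ x ∈ U, x ∈ s)
    (hU : ∀ x ∈ U, ∀ y ∈ U, ∀ z ∈ U, x ≠ y → x ≠ z → y ≠ z →
      G.Adj x y ∨ G.Adj x z ∨ G.Adj y z) :
    U.card ≤ 2 * M := by
  classical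
  obtain ⟨C⟩ := h
  set U' : Finset ↥s := U.attach.map
    ⟨fun x => ⟨x.1, hUs _ x.2⟩, fun x y hxy => by
      apply Subtype.ext; have := congrArg Subtype.val hxy; simpa using this⟩ with hU'
  have hcard : U'.card = U.card := by simp [hU']
  have hmemU : ∀ x ∈ U', (x : V) ∈ U := by
    intro x hx
    simp only [hU', Finset.mem_map, Finset.mem_attach, Function.Embedding.coeFn_mk,
      true_and] at hx
    obtain ⟨y, rfl⟩ := hx
    exact y.2
  have key : U'.card ≤ 2 * (U'.image C).card := by
    apply Finset.card_le_mul_card_image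
    intro col hcol
    by_contra hgt
    push_neg at hgt
    obtain ⟨x, y, z, hx, hy, hz, hxy, hxz, hyz⟩ := Finset.two_lt_card_iff.mp hgt
    rw [Finset.mem_filter] at hx hy hz
    have hxv : (x : V) ≠ y := fun hh => hxy (Subtype.ext hh)
    have hxzv : (x : V) ≠ z := fun hh => hxz (Subtype.ext hh)
    have hyzv : (y : V) ≠ z := fun hh => hyz (Subtype.ext hh)
    have hor := hU x (hmemU _ hx.1) y (hmemU _ hy.1) z (hmemU _ hz.1) hxv hxzv hyzv
    rcases hor with hadj | hadj | hadj
    · exact C.valid (by simpa using hadj) (hx.2.trans hy.2.symm)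
    · exact C.valid (by simpa using hadj) (hx.2.trans hz.2.symm)
    · exact C.valid (by simpa using hadj) (hy.2.trans hz.2.symm)
  have himg : (U'.image C).card ≤ M := by
    have := Finset.card_le_univ (U'.image C)
    simpa using this
  omega

lemma colorable_of_chromaticNumber_lt {M : ℕ}
    (h : G.chromaticNumber < ((M + 1 : ℕ) : ℕ∞)) : G.Colorable M := by
  rw [← SimpleGraph.chromaticNumber_le_iff_colorable]
  have hcast : ((M + 1 : ℕ) : ℕ∞) = (M : ℕ∞) + 1 := by push_cast; ring
  rw [hcast] at h
  exact (ENat.lt_add_one_iff (by simp)).mp h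

lemma build_coloring {Q : Fin 6 → Set V}
    (hcov : ∀ v : V, ∃ i, v ∈ Q i)
    (hanti : ∀ i j, i ≠ j → ¬ graphG2.Adj i j → AnticompleteTo G (Q i) (Q j))
    (a : Fin 6 → ℕ) (M : ℕ)
    (c : ∀ i, (G.induce (Q i)).Coloring ℕ)
    (hc : ∀ i x, c i x < a i)
    (f : Fin 6 → ℕ → ℕ)
    (P1 : ∀ i x, x < a i → f i x < M)
    (P2 : ∀ i x y, x < a i → y < a i → x ≠ y → f i x ≠ f i y)
    (P3 : ∀ i j, graphG2.Adj i j → ∀ x y, x < a i → y < a j → f i x ≠ f j y) :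
    G.Colorable M := by
  classical
  rw [SimpleGraph.colorable_iff_exists_bdd_nat_coloring]
  have hmem : ∀ v, v ∈ Q ((hcov v).choose) := fun v => (hcov v).choose_spec
  have hvalid : ∀ {u v : V}, G.Adj u v →
      f ((hcov u).choose) (c _ ⟨u, hmem u⟩) ≠ f ((hcov v).choose) (c _ ⟨v, hmem v⟩) := by
    intro u v huv
    have key : ∀ (i j : Fin 6) (hu' : u ∈ Q i) (hv' : v ∈ Q j),
        f i (c i ⟨u, hu'⟩) ≠ f j (c j ⟨v, hv'⟩) := by
      intro i j hu' hv'
      by_cases hij : i = j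
      · subst hij
        have hadj : (G.induce (Q i)).Adj ⟨u, hu'⟩ ⟨v, hv'⟩ := by simpa using huv
        exact P2 i _ _ (hc i _) (hc i _) ((c i).valid hadj)
      · by_cases hadj2 : graphG2.Adj i j
        · exact P3 i j hadj2 _ _ (hc i _) (hc j _)
        · exact absurd huv (hanti i j hij hadj2 u hu' v hv')
    exact key _ _ _ _
  exact ⟨SimpleGraph.Coloring.mk
    (fun v => f ((hcov v).choose) (c _ ⟨v, hmem v⟩)) hvalid,
    fun v => P1 _ _ (hc _ _)⟩

lemma G2_triple : ∀ i j l : Fin 6, i.val < 5 → j.val < 5 → l.val < 5 →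
    i ≠ j → i ≠ l → j ≠ l →
    graphG2.Adj i j ∨ graphG2.Adj i l ∨ graphG2.Adj j l := by decide

end helpers

/-- no `P₄`-free expansion of `G₂` is `k`-vertex-critical for any `k`. -/
theorem no_critical_P4free_expansion_of_G2 {V : Type*} [Fintype V] (G : SimpleGraph V)
    (Q : Fin 6 → Set V) (hexp : IsExpansion G graphG2 Q)
    (hP4free : ∀ i, IndFree P4 (G.induce (Q i))) :
    ∀ k : ℕ, ¬ IsKVertexCritical G k := by
  classical
  obtain ⟨hne, hdisj, hcov, hcomp, hanti⟩ := hexp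
  intro k hcrit
  obtain ⟨hchrom, hdel⟩ := hcrit
  obtain ⟨v1, hv1⟩ := hne 1
  obtain ⟨v5, hv5⟩ := hne 5
  rcases Nat.eq_zero_or_pos k with rfl | hk
  · exact absurd (hdel v1) (by simp)
  set M := k - 1 with hMdef
  have hkM : k = M + 1 := by omega
  have hkcast : ((M + 1 : ℕ) : ℕ∞) = (k : ℕ∞) := by rw [← hkM]
  have hcol1 : (G.induce {u | u ≠ v1}).Colorable M :=
    colorable_of_chromaticNumber_lt (hkcast ▸ hdel v1)
  have hcol5 : (G.induce {u | u ≠ v5}).Colorable M :=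
    colorable_of_chromaticNumber_lt (hkcast ▸ hdel v5)
  -- parts are (weakly) perfect
  have hnp4 : ∀ i, NoP4 (G.induce (Q i)) := fun i a b c d hab hbc hcd hac hbd had =>
    (hP4free i).p4_pattern hab hbc hcd hac hbd had
  have hper : ∀ i : Fin 6, ∃ s : Finset ↥(Q i),
      (G.induce (Q i)).IsClique ↑s ∧ (G.induce (Q i)).Colorable s.card := by
    intro i
    haveI : Fintype ↥(Q i) := Fintype.ofFinite _
    exact cograph_perfect (Fintype.card ↥(Q i)) (G.induce (Q i)) le_rfl (hnp4 i)
  choose s hsclq hscol using hper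
  -- cliques in G
  set K : Fin 6 → Finset V := fun i => (s i).map ⟨Subtype.val, Subtype.val_injective⟩ with hKdef
  have hKcard : ∀ i, (K i).card = (s i).card := fun i => Finset.card_map _
  have hKmem : ∀ i x, x ∈ K i → x ∈ Q i := by
    intro i x hx
    simp only [hKdef, Finset.mem_map, Function.Embedding.coeFn_mk] at hx
    obtain ⟨y, -, rfl⟩ := hx
    exact y.2
  have hKclq : ∀ i, G.IsClique ↑(K i) := by
    intro i x hx y hy hxy
    simp only [hKdef, Finset.coe_map, Set.mem_image, Finset.mem_coe,
      Function.Embedding.coeFn_mk] at hx hy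
    obtain ⟨x', hx', rfl⟩ := hx
    obtain ⟨y', hy', rfl⟩ := hy
    have := hsclq i hx' hy' (fun hh => hxy (congrArg Subtype.val hh))
    simpa using this
  have hKadj : ∀ i j, graphG2.Adj i j → ∀ x ∈ K i, ∀ y ∈ K j, G.Adj x y :=
    fun i j hadj x hx y hy => hcomp i j hadj x (hKmem i x hx) y (hKmem j y hy)
  have hKdisj : ∀ i j : Fin 6, i ≠ j → ∀ x ∈ K i, x ∉ K j :=
    fun i j hij x hx hx' => Set.disjoint_left.mp (hdisj hij) (hKmem i x hx) (hKmem j x hx')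
  have hKne : ∀ i w : Fin 6, i ≠ w → ∀ vdel ∈ Q w, ∀ x ∈ K i, x ≠ vdel :=
    fun i w hiw vdel hvdel x hx hh =>
      Set.disjoint_left.mp (hdisj hiw) (hKmem i x hx) (hh ▸ hvdel)
  -- pair clique bounds
  have pairB : ∀ i j w : Fin 6, graphG2.Adj i j → i ≠ w → j ≠ w → ∀ vdel ∈ Q w,
      (G.induce {u | u ≠ vdel}).Colorable M → (s i).card + (s j).card ≤ M := by
    intro i j w hadj hiw hjw vdel hvdel hcolM
    have hij := hadj.ne
    have hclq : G.IsClique ↑(K i ∪ K j) := by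
      intro x hx y hy hxy
      simp only [Finset.coe_union, Set.mem_union, Finset.mem_coe] at hx hy
      rcases hx with hx | hx <;> rcases hy with hy | hy
      · exact hKclq i hx hy hxy
      · exact hKadj i j hadj x hx y hy
      · exact (hKadj i j hadj y hy x hx).symm
      · exact hKclq j hx hy hxy
    have hsub : ∀ x ∈ K i ∪ K j, x ∈ {u : V | u ≠ vdel} := by
      intro x hx
      rcases Finset.mem_union.mp hx with hx | hx
      · exact hKne i w hiw vdel hvdel x hx
      · exact hKne j w hjw vdel hvdel x hx
    have hle := clique_card_le_of_induce_colorable hcolM hclq hsub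
    rwa [Finset.card_union_of_disjoint (Finset.disjoint_left.mpr (hKdisj i j hij)),
      hKcard, hKcard] at hle
  -- triple clique bound (parts 2,3,5; deleting a vertex of part 1)
  have hA : (s 2).card + (s 3).card + (s 5).card ≤ M := by
    have hclq : G.IsClique ↑(K 2 ∪ K 3 ∪ K 5) := by
      intro x hx y hy hxy
      simp only [Finset.coe_union, Set.mem_union, Finset.mem_coe] at hx hy
      rcases hx with (hx | hx) | hx <;> rcases hy with (hy | hy) | hy
      · exact hKclq 2 hx hy hxy
      · exact hKadj 2 3 (by decide) x hx y hy
      · exact hKadj 2 5 (by decide) x hx y hy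
      · exact (hKadj 2 3 (by decide) y hy x hx).symm
      · exact hKclq 3 hx hy hxy
      · exact hKadj 3 5 (by decide) x hx y hy
      · exact (hKadj 2 5 (by decide) y hy x hx).symm
      · exact (hKadj 3 5 (by decide) y hy x hx).symm
      · exact hKclq 5 hx hy hxy
    have hsub : ∀ x ∈ K 2 ∪ K 3 ∪ K 5, x ∈ {u : V | u ≠ v1} := by
      intro x hx
      rcases Finset.mem_union.mp hx with hx | hx
      · rcases Finset.mem_union.mp hx with hx | hx
        · exact hKne 2 1 (by decide) v1 hv1 x hx
        · exact hKne 3 1 (by decide) v1 hv1 x hx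
      · exact hKne 5 1 (by decide) v1 hv1 x hx
    have hle := clique_card_le_of_induce_colorable hcol1 hclq hsub
    have hd23 : Disjoint (K 2) (K 3) := Finset.disjoint_left.mpr (hKdisj 2 3 (by decide))
    have hd235 : Disjoint (K 2 ∪ K 3) (K 5) := by
      rw [Finset.disjoint_union_left]
      exact ⟨Finset.disjoint_left.mpr (hKdisj 2 5 (by decide)),
        Finset.disjoint_left.mpr (hKdisj 3 5 (by decide))⟩
    rwa [Finset.card_union_of_disjoint hd235, Finset.card_union_of_disjoint hd23,
      hKcard, hKcard, hKcard] at hle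
  have hB := pairB 0 5 1 (by decide) (by decide) (by decide) v1 hv1 hcol1
  have hC := pairB 0 4 1 (by decide) (by decide) (by decide) v1 hv1 hcol1
  have hD := pairB 3 4 1 (by decide) (by decide) (by decide) v1 hv1 hcol1
  have hE := pairB 0 1 5 (by decide) (by decide) (by decide) v5 hv5 hcol5
  have hF := pairB 1 2 5 (by decide) (by decide) (by decide) v5 hv5 hcol5
  -- the C5 bound (parts 0..4; deleting a vertex of part 5)
  have hG5 : (s 0).card + (s 1).card + (s 2).card + (s 3).card + (s 4).card ≤ 2 * M := by
    set U : Finset V := K 0 ∪ K 1 ∪ K 2 ∪ K 3 ∪ K 4 with hU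
    have hUidx : ∀ x ∈ U, ∃ i : Fin 6, i.val < 5 ∧ x ∈ K i := by
      intro x hx
      simp only [hU, Finset.mem_union] at hx
      rcases hx with (((hx | hx) | hx) | hx) | hx
      · exact ⟨0, by decide, hx⟩
      · exact ⟨1, by decide, hx⟩
      · exact ⟨2, by decide, hx⟩
      · exact ⟨3, by decide, hx⟩
      · exact ⟨4, by decide, hx⟩
    have hUsub : ∀ x ∈ U, x ∈ {u : V | u ≠ v5} := by
      intro x hx
      obtain ⟨i, hi5, hxi⟩ := hUidx x hx
      have hi : i ≠ 5 := by
        intro hh; rw [hh] at hi5; exact absurd hi5 (by decide)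
      exact hKne i 5 hi v5 hv5 x hxi
    have htri : ∀ x ∈ U, ∀ y ∈ U, ∀ z ∈ U, x ≠ y → x ≠ z → y ≠ z →
        G.Adj x y ∨ G.Adj x z ∨ G.Adj y z := by
      intro x hx y hy z hz hxy hxz hyz
      obtain ⟨i, hi5, hxi⟩ := hUidx x hx
      obtain ⟨j, hj5, hyj⟩ := hUidx y hy
      obtain ⟨l, hl5, hzl⟩ := hUidx z hz
      by_cases hij : i = j
      · subst hij
        exact Or.inl (hKclq i hxi hyj hxy)
      · by_cases hil : i = l
        · subst hil
          exact Or.inr (Or.inl (hKclq i hxi hzl hxz))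
        · by_cases hjl : j = l
          · subst hjl
            exact Or.inr (Or.inr (hKclq j hyj hzl hyz))
          · rcases G2_triple i j l hi5 hj5 hl5 hij hil hjl with h | h | h
            · exact Or.inl (hKadj i j h x hxi y hyj)
            · exact Or.inr (Or.inl (hKadj i l h x hxi z hzl))
            · exact Or.inr (Or.inr (hKadj j l h y hyj z hzl))
    have hle := card_le_two_mul_of_induce_colorable hcol5 U hUsub htri
    have d1 : Disjoint (K 0) (K 1) := Finset.disjoint_left.mpr (hKdisj 0 1 (by decide))
    have d2 : Disjoint (K 0 ∪ K 1) (K 2) := by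
      rw [Finset.disjoint_union_left]
      exact ⟨Finset.disjoint_left.mpr (hKdisj 0 2 (by decide)),
        Finset.disjoint_left.mpr (hKdisj 1 2 (by decide))⟩
    have d3 : Disjoint (K 0 ∪ K 1 ∪ K 2) (K 3) := by
      rw [Finset.disjoint_union_left, Finset.disjoint_union_left]
      exact ⟨⟨Finset.disjoint_left.mpr (hKdisj 0 3 (by decide)),
        Finset.disjoint_left.mpr (hKdisj 1 3 (by decide))⟩,
        Finset.disjoint_left.mpr (hKdisj 2 3 (by decide))⟩
    have d4 : Disjoint (K 0 ∪ K 1 ∪ K 2 ∪ K 3) (K 4) := by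
      rw [Finset.disjoint_union_left, Finset.disjoint_union_left,
        Finset.disjoint_union_left]
      exact ⟨⟨⟨Finset.disjoint_left.mpr (hKdisj 0 4 (by decide)),
        Finset.disjoint_left.mpr (hKdisj 1 4 (by decide))⟩,
        Finset.disjoint_left.mpr (hKdisj 2 4 (by decide))⟩,
        Finset.disjoint_left.mpr (hKdisj 3 4 (by decide))⟩
    rwa [hU, Finset.card_union_of_disjoint d4, Finset.card_union_of_disjoint d3,
      Finset.card_union_of_disjoint d2, Finset.card_union_of_disjoint d1,
      hKcard, hKcard, hKcard, hKcard, hKcard] at hle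
  -- abbreviations
  set a0 := (s 0).card with ha0
  set a1 := (s 1).card with ha1
  set a2 := (s 2).card with ha2
  set a3 := (s 3).card with ha3
  set a4 := (s 4).card with ha4
  set a5 := (s 5).card with ha5
  set p := max a1 a5 with hpdef
  have hp1 : a1 ≤ p := le_max_left _ _
  have hp5 : a5 ≤ p := le_max_right _ _
  have hpor : p = a1 ∨ p = a5 := max_choice _ _
  -- part colourings
  have hcex : ∀ i, ∃ C : (G.induce (Q i)).Coloring ℕ, ∀ x, C x < (s i).card :=
    fun i => (SimpleGraph.colorable_iff_exists_bdd_nat_coloring _).mp (hscol i)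
  choose c hcbd using hcex
  set A : Fin 6 → ℕ := ![a0, a1, a2, a3, a4, a5] with hAdef
  have hAs : ∀ i, A i = (s i).card := by
    intro i
    fin_cases i <;> rfl
  have hAc : ∀ i x, c i x < A i := fun i x => by rw [hAs i]; exact hcbd i x
  -- final contradiction once G is M-colorable
  have hfinal : G.Colorable M → False := by
    intro hcolG
    have hle := hcolG.chromaticNumber_le
    rw [hchrom] at hle
    have : k ≤ M := by exact_mod_cast hle
    omega
  apply hfinal
  -- case analysis to build the colouring
  by_cases case1 : p + a2 + a3 ≤ M
  · set f : Fin 6 → ℕ → ℕ :=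
      ![fun x => M - a0 + x, fun x => x, fun x => p + x, fun x => M - a3 + x,
        fun x => x, fun x => x] with hfdef
    have ef0 : ∀ x, f 0 x = M - a0 + x := fun _ => rfl
    have ef1 : ∀ x, f 1 x = x := fun _ => rfl
    have ef2 : ∀ x, f 2 x = p + x := fun _ => rfl
    have ef3 : ∀ x, f 3 x = M - a3 + x := fun _ => rfl
    have ef4 : ∀ x, f 4 x = x := fun _ => rfl
    have ef5 : ∀ x, f 5 x = x := fun _ => rfl
    have eA0 : A 0 = a0 := rfl
    have eA1 : A 1 = a1 := rfl
    have eA2 : A 2 = a2 := rfl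
    have eA3 : A 3 = a3 := rfl
    have eA4 : A 4 = a4 := rfl
    have eA5 : A 5 = a5 := rfl
    apply build_coloring hcov hanti A M c hAc f
    · intro i
      rcases show i = 0 ∨ i = 1 ∨ i = 2 ∨ i = 3 ∨ i = 4 ∨ i = 5 by revert i; decide
        with rfl | rfl | rfl | rfl | rfl | rfl <;>
        (intro x hx;
         simp only [eA0, eA1, eA2, eA3, eA4, eA5] at hx;
         simp only [ef0, ef1, ef2, ef3, ef4, ef5];
         omega)
    · intro i
      rcases show i = 0 ∨ i = 1 ∨ i = 2 ∨ i = 3 ∨ i = 4 ∨ i = 5 by revert i; decide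
        with rfl | rfl | rfl | rfl | rfl | rfl <;>
        (intro x y hx hy hxy;
         simp only [eA0, eA1, eA2, eA3, eA4, eA5] at hx hy;
         simp only [ef0, ef1, ef2, ef3, ef4, ef5];
         omega)
    · intro i j hadj
      rw [graphG2, SimpleGraph.fromRel_adj] at hadj
      obtain ⟨-, hadj⟩ := hadj
      simp only [List.mem_cons, List.not_mem_nil, or_false, Prod.mk.injEq] at hadj
      rcases hadj with
        (⟨rfl,rfl⟩|⟨rfl,rfl⟩|⟨rfl,rfl⟩|⟨rfl,rfl⟩|⟨rfl,rfl⟩|⟨rfl,rfl⟩|⟨rfl,rfl⟩|⟨rfl,rfl⟩)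
        |(⟨rfl,rfl⟩|⟨rfl,rfl⟩|⟨rfl,rfl⟩|⟨rfl,rfl⟩|⟨rfl,rfl⟩|⟨rfl,rfl⟩|⟨rfl,rfl⟩|⟨rfl,rfl⟩) <;>
        (intro x y hx hy;
         simp only [eA0, eA1, eA2, eA3, eA4, eA5] at hx hy;
         simp only [ef0, ef1, ef2, ef3, ef4, ef5];
         omega)
  · by_cases case2 : a2 + a3 + a4 ≤ M
    · set f : Fin 6 → ℕ → ℕ :=
        ![fun x => M - a0 + x, fun x => x, fun x => p + x,
          fun x => if x < p - (M - a2 - a3) then M - a2 - a3 + x else M - a2 - a3 + a2 + x,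
          fun x => x, fun x => x] with hfdef
      have ef0 : ∀ x, f 0 x = M - a0 + x := fun _ => rfl
      have ef1 : ∀ x, f 1 x = x := fun _ => rfl
      have ef2 : ∀ x, f 2 x = p + x := fun _ => rfl
      have ef3 : ∀ x, f 3 x =
          if x < p - (M - a2 - a3) then M - a2 - a3 + x else M - a2 - a3 + a2 + x :=
        fun _ => rfl
      have ef4 : ∀ x, f 4 x = x := fun _ => rfl
      have ef5 : ∀ x, f 5 x = x := fun _ => rfl
      have eA0 : A 0 = a0 := rfl
      have eA1 : A 1 = a1 := rfl
      have eA2 : A 2 = a2 := rfl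
      have eA3 : A 3 = a3 := rfl
      have eA4 : A 4 = a4 := rfl
      have eA5 : A 5 = a5 := rfl
      apply build_coloring hcov hanti A M c hAc f
      · intro i
        rcases show i = 0 ∨ i = 1 ∨ i = 2 ∨ i = 3 ∨ i = 4 ∨ i = 5 by revert i; decide
          with rfl | rfl | rfl | rfl | rfl | rfl <;>
          (intro x hx;
           simp only [eA0, eA1, eA2, eA3, eA4, eA5] at hx;
           simp only [ef0, ef1, ef2, ef3, ef4, ef5];
           (try split_ifs) <;> omega)
      · intro i
        rcases show i = 0 ∨ i = 1 ∨ i = 2 ∨ i = 3 ∨ i = 4 ∨ i = 5 by revert i; decide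
          with rfl | rfl | rfl | rfl | rfl | rfl <;>
          (intro x y hx hy hxy;
           simp only [eA0, eA1, eA2, eA3, eA4, eA5] at hx hy;
           simp only [ef0, ef1, ef2, ef3, ef4, ef5];
           (try split_ifs) <;> omega)
      · intro i j hadj
        rw [graphG2, SimpleGraph.fromRel_adj] at hadj
        obtain ⟨-, hadj⟩ := hadj
        simp only [List.mem_cons, List.not_mem_nil, or_false, Prod.mk.injEq] at hadj
        rcases hadj with
          (⟨rfl,rfl⟩|⟨rfl,rfl⟩|⟨rfl,rfl⟩|⟨rfl,rfl⟩|⟨rfl,rfl⟩|⟨rfl,rfl⟩|⟨rfl,rfl⟩|⟨rfl,rfl⟩)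
          |(⟨rfl,rfl⟩|⟨rfl,rfl⟩|⟨rfl,rfl⟩|⟨rfl,rfl⟩|⟨rfl,rfl⟩|⟨rfl,rfl⟩|⟨rfl,rfl⟩|⟨rfl,rfl⟩) <;>
          (intro x y hx hy;
           simp only [eA0, eA1, eA2, eA3, eA4, eA5] at hx hy;
           simp only [ef0, ef1, ef2, ef3, ef4, ef5];
           (try split_ifs) <;> omega)
    · set f : Fin 6 → ℕ → ℕ :=
        ![fun x => M - a0 + x, fun x => x, fun x => p + x,
          fun x => if x < p - (M - a2 - a3) then M - a2 - a3 + x else M - a2 - a3 + a2 + x,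
          fun x => if x < M - a2 - a3 then x else p + x - (M - a2 - a3),
          fun x => x] with hfdef
      have ef0 : ∀ x, f 0 x = M - a0 + x := fun _ => rfl
      have ef1 : ∀ x, f 1 x = x := fun _ => rfl
      have ef2 : ∀ x, f 2 x = p + x := fun _ => rfl
      have ef3 : ∀ x, f 3 x =
          if x < p - (M - a2 - a3) then M - a2 - a3 + x else M - a2 - a3 + a2 + x :=
        fun _ => rfl
      have ef4 : ∀ x, f 4 x = if x < M - a2 - a3 then x else p + x - (M - a2 - a3) :=
        fun _ => rfl
      have ef5 : ∀ x, f 5 x = x := fun _ => rfl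
      have eA0 : A 0 = a0 := rfl
      have eA1 : A 1 = a1 := rfl
      have eA2 : A 2 = a2 := rfl
      have eA3 : A 3 = a3 := rfl
      have eA4 : A 4 = a4 := rfl
      have eA5 : A 5 = a5 := rfl
      apply build_coloring hcov hanti A M c hAc f
      · intro i
        rcases show i = 0 ∨ i = 1 ∨ i = 2 ∨ i = 3 ∨ i = 4 ∨ i = 5 by revert i; decide
          with rfl | rfl | rfl | rfl | rfl | rfl <;>
          (intro x hx;
           simp only [eA0, eA1, eA2, eA3, eA4, eA5] at hx;
           simp only [ef0, ef1, ef2, ef3, ef4, ef5];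
           (try split_ifs) <;> omega)
      · intro i
        rcases show i = 0 ∨ i = 1 ∨ i = 2 ∨ i = 3 ∨ i = 4 ∨ i = 5 by revert i; decide
          with rfl | rfl | rfl | rfl | rfl | rfl <;>
          (intro x y hx hy hxy;
           simp only [eA0, eA1, eA2, eA3, eA4, eA5] at hx hy;
           simp only [ef0, ef1, ef2, ef3, ef4, ef5];
           (try split_ifs) <;> omega)
      · intro i j hadj
        rw [graphG2, SimpleGraph.fromRel_adj] at hadj
        obtain ⟨-, hadj⟩ := hadj
        simp only [List.mem_cons, List.not_mem_nil, or_false, Prod.mk.injEq] at hadj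
        rcases hadj with
          (⟨rfl,rfl⟩|⟨rfl,rfl⟩|⟨rfl,rfl⟩|⟨rfl,rfl⟩|⟨rfl,rfl⟩|⟨rfl,rfl⟩|⟨rfl,rfl⟩|⟨rfl,rfl⟩)
          |(⟨rfl,rfl⟩|⟨rfl,rfl⟩|⟨rfl,rfl⟩|⟨rfl,rfl⟩|⟨rfl,rfl⟩|⟨rfl,rfl⟩|⟨rfl,rfl⟩|⟨rfl,rfl⟩) <;>
          (intro x y hx hy;
           simp only [eA0, eA1, eA2, eA3, eA4, eA5] at hx hy;
           simp only [ef0, ef1, ef2, ef3, ef4, ef5];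
           (try split_ifs) <;> omega)
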